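/- For all x > 0, the chain of inequalities holds: (cosh x)^{1/3} < (1/3 + (2/3) cosh x)^{1/2} < (1/2 + (1/2) cosh x)^{2/3} < (8/15 + (7/15) cosh x)^{5/7} < (sinh x)/x < 2/3 + (1/3) cosh x. -/

import Mathlib

open Real

lemma pos_of_deriv_chain (f f' : ℝ → ℝ) (h : ∀ y, HasDerivAt f (f' y) y)
    (h0 : f 0 = 0) (hpos : ∀ y, 0 < y → 0 < f' y) :
    ∀ x, 0 < x → 0 < f x := by
  intro x hx
  have hmono : StrictMonoOn f (Set.Ici 0) := by
    apply strictMonoOn_of_deriv_pos (convex_Ici 0)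
    · exact fun y _ => (h y).continuousAt.continuousWithinAt
    · intro y hy
      rw [interior_Ici, Set.mem_Ioi] at hy
      rw [(h y).deriv]
      exact hpos y hy
  have := hmono Set.self_mem_Ici (Set.mem_Ici.mpr hx.le) hx
  simpa [h0] using this

lemma key_concave (t a b : ℝ) (ht : 0 < t) (hb : 0 < b) (hab : b < a) :
    (1 + a * t) ^ ((1:ℝ)/(3*a)) < (1 + b * t) ^ ((1:ℝ)/(3*b)) := by
  have ha : 0 < a := hb.trans hab
  have h1 : 0 < 1 + a * t := by positivity
  have h2 : 0 < 1 + b * t := by positivity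
  have hne : (1:ℝ) ≠ 1 + a * t := by nlinarith
  have hw1 : 0 < 1 - b / a := by
    have : b / a < 1 := (div_lt_one ha).mpr hab
    linarith
  have hw2 : 0 < b / a := by positivity
  have hconc := strictConcaveOn_log_Ioi.2 (Set.mem_Ioi.mpr one_pos)
    (Set.mem_Ioi.mpr h1) hne hw1 hw2 (by ring)
  simp only [smul_eq_mul, log_one, mul_one] at hconc
  have harg : 1 - b / a + b / a * (1 + a * t) = 1 + b * t := by
    field_simp; ring
  rw [harg, mul_zero, zero_add] at hconc
  have hlog1 : 0 ≤ log (1 + a * t) := log_nonneg (by nlinarith)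
  have hexp : log (1 + a * t) * ((1:ℝ)/(3*a)) < log (1 + b * t) * ((1:ℝ)/(3*b)) := by
    rw [div_mul_eq_mul_div, div_lt_iff₀ ha] at hconc
    rw [mul_one_div, mul_one_div, div_lt_div_iff₀ (by positivity) (by positivity)]
    nlinarith [hconc]
  rw [rpow_def_of_pos h1, rpow_def_of_pos h2]
  exact exp_lt_exp.mpr hexp

namespace Stmt14
open Real

noncomputable def F0 : ℝ → ℝ := fun y => y*(2*(cosh y)^2-1)+8*(y*cosh y)+6*y-8*sinh y-7*(sinh y*cosh y)
noncomputable def F1 : ℝ → ℝ := fun y => -12*(cosh y)^2+4*(y*(sinh y*cosh y))+8*(y*sinh y)+12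
noncomputable def F2 : ℝ → ℝ := fun y => -20*(sinh y*cosh y)+8*(y*(cosh y)^2)-4*y+8*sinh y+8*(y*cosh y)
noncomputable def F3 : ℝ → ℝ := fun y => -32*(cosh y)^2+16*(y*(sinh y*cosh y))+16*cosh y+8*(y*sinh y)+16
noncomputable def F4 : ℝ → ℝ := fun y => -48*(sinh y*cosh y)+32*(y*(cosh y)^2)-16*y+24*sinh y+8*(y*cosh y)
noncomputable def F5 : ℝ → ℝ := fun y => -64*(cosh y)^2+64*(y*(sinh y*cosh y))+32*cosh y+8*(y*sinh y)+32
noncomputable def F6 : ℝ → ℝ := fun y => -64*(sinh y*cosh y)+128*(y*(cosh y)^2)-64*y+40*sinh y+8*(y*cosh y)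
noncomputable def F7 : ℝ → ℝ := fun y => 256*(y*(sinh y*cosh y))+48*cosh y+8*(y*sinh y)

lemma dF0 (y : ℝ) : HasDerivAt F0 (F1 y) y := by
  have hs := Real.hasDerivAt_sinh y
  have hc := Real.hasDerivAt_cosh y
  have hid := hasDerivAt_id y
  have H := (((((hid.mul (((hc.pow 2).const_mul 2).sub_const 1)).add
    ((hid.mul hc).const_mul 8)).add (hid.const_mul 6)).sub
    (hs.const_mul 8)).sub ((hs.mul hc).const_mul 7))
  refine H.congr_deriv (Eq.symm ?_)
  simp only [F1, id, Pi.pow_apply, Pi.mul_apply]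
  linear_combination (-7 : ℝ) * (Real.cosh_sq_sub_sinh_sq y)

lemma dF1 (y : ℝ) : HasDerivAt F1 (F2 y) y := by
  have hs := Real.hasDerivAt_sinh y
  have hc := Real.hasDerivAt_cosh y
  have hid := hasDerivAt_id y
  have H := (((((hc.pow 2).const_mul (-12)).add
    ((hid.mul (hs.mul hc)).const_mul 4)).add
    ((hid.mul hs).const_mul 8)).add_const 12)
  refine H.congr_deriv (Eq.symm ?_)
  simp only [F2, id, Pi.pow_apply, Pi.mul_apply]
  linear_combination (4*y : ℝ) * (Real.cosh_sq_sub_sinh_sq y)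

lemma dF2 (y : ℝ) : HasDerivAt F2 (F3 y) y := by
  have hs := Real.hasDerivAt_sinh y
  have hc := Real.hasDerivAt_cosh y
  have hid := hasDerivAt_id y
  have H := ((((((hs.mul hc).const_mul (-20)).add
    ((hid.mul (hc.pow 2)).const_mul 8)).sub (hid.const_mul 4)).add
    (hs.const_mul 8)).add ((hid.mul hc).const_mul 8))
  refine H.congr_deriv (Eq.symm ?_)
  simp only [F3, id, Pi.pow_apply, Pi.mul_apply]
  linear_combination (-20 : ℝ) * (Real.cosh_sq_sub_sinh_sq y)

lemma dF3 (y : ℝ) : HasDerivAt F3 (F4 y) y := by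
  have hs := Real.hasDerivAt_sinh y
  have hc := Real.hasDerivAt_cosh y
  have hid := hasDerivAt_id y
  have H := ((((((hc.pow 2).const_mul (-32)).add
    ((hid.mul (hs.mul hc)).const_mul 16)).add (hc.const_mul 16)).add
    ((hid.mul hs).const_mul 8)).add_const 16)
  refine H.congr_deriv (Eq.symm ?_)
  simp only [F4, id, Pi.pow_apply, Pi.mul_apply]
  linear_combination (16*y : ℝ) * (Real.cosh_sq_sub_sinh_sq y)

lemma dF4 (y : ℝ) : HasDerivAt F4 (F5 y) y := by
  have hs := Real.hasDerivAt_sinh y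
  have hc := Real.hasDerivAt_cosh y
  have hid := hasDerivAt_id y
  have H := ((((((hs.mul hc).const_mul (-48)).add
    ((hid.mul (hc.pow 2)).const_mul 32)).sub (hid.const_mul 16)).add
    (hs.const_mul 24)).add ((hid.mul hc).const_mul 8))
  refine H.congr_deriv (Eq.symm ?_)
  simp only [F5, id, Pi.pow_apply, Pi.mul_apply]
  linear_combination (-48 : ℝ) * (Real.cosh_sq_sub_sinh_sq y)

lemma dF5 (y : ℝ) : HasDerivAt F5 (F6 y) y := by
  have hs := Real.hasDerivAt_sinh y
  have hc := Real.hasDerivAt_cosh y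
  have hid := hasDerivAt_id y
  have H := ((((((hc.pow 2).const_mul (-64)).add
    ((hid.mul (hs.mul hc)).const_mul 64)).add (hc.const_mul 32)).add
    ((hid.mul hs).const_mul 8)).add_const 32)
  refine H.congr_deriv (Eq.symm ?_)
  simp only [F6, id, Pi.pow_apply, Pi.mul_apply]
  linear_combination (64*y : ℝ) * (Real.cosh_sq_sub_sinh_sq y)

lemma dF6 (y : ℝ) : HasDerivAt F6 (F7 y) y := by
  have hs := Real.hasDerivAt_sinh y
  have hc := Real.hasDerivAt_cosh y
  have hid := hasDerivAt_id y
  have H := ((((((hs.mul hc).const_mul (-64)).add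
    ((hid.mul (hc.pow 2)).const_mul 128)).sub (hid.const_mul 64)).add
    (hs.const_mul 40)).add ((hid.mul hc).const_mul 8))
  refine H.congr_deriv (Eq.symm ?_)
  simp only [F7, id, Pi.pow_apply, Pi.mul_apply]
  linear_combination (-64 : ℝ) * (Real.cosh_sq_sub_sinh_sq y)

lemma F0_pos : ∀ x, 0 < x → 0 < F0 x := by
  have h7 : ∀ x, 0 < x → 0 < F7 x := by
    intro x hx
    have hs : 0 < Real.sinh x := Real.sinh_pos_iff.mpr hx
    have hc : 0 < Real.cosh x := Real.cosh_pos x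
    simp only [F7]
    positivity
  have h6 := pos_of_deriv_chain F6 F7 dF6 (by simp [F6]) h7
  have h5 := pos_of_deriv_chain F5 F6 dF5 (by norm_num [F5]) h6
  have h4 := pos_of_deriv_chain F4 F5 dF4 (by simp [F4]) h5
  have h3 := pos_of_deriv_chain F3 F4 dF3 (by norm_num [F3]) h4
  have h2 := pos_of_deriv_chain F2 F3 dF2 (by simp [F2]) h3
  have h1 := pos_of_deriv_chain F1 F2 dF1 (by norm_num [F1]) h2
  exact pos_of_deriv_chain F0 F1 dF0 (by simp [F0]) h1

end Stmt14

namespace Stmt14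

noncomputable def G0 : ℝ → ℝ := fun y => 2*y + y*cosh y - 3*sinh y
noncomputable def G1 : ℝ → ℝ := fun y => 2 - 2*cosh y + y*sinh y
noncomputable def G2 : ℝ → ℝ := fun y => y*cosh y - sinh y

lemma dG0 (y : ℝ) : HasDerivAt G0 (G1 y) y := by
  have hs := Real.hasDerivAt_sinh y
  have hc := Real.hasDerivAt_cosh y
  have hid := hasDerivAt_id y
  have H := ((hid.const_mul 2).add (hid.mul hc)).sub (hs.const_mul 3)
  refine H.congr_deriv (Eq.symm ?_)
  simp only [G1, id]; ring

lemma dG1 (y : ℝ) : HasDerivAt G1 (G2 y) y := by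
  have hs := Real.hasDerivAt_sinh y
  have hc := Real.hasDerivAt_cosh y
  have hid := hasDerivAt_id y
  have H := ((hasDerivAt_const y (2:ℝ)).sub (hc.const_mul 2)).add (hid.mul hs)
  refine H.congr_deriv (Eq.symm ?_)
  simp only [G2, id]; ring

lemma dG2 (y : ℝ) : HasDerivAt G2 (y * sinh y) y := by
  have hs := Real.hasDerivAt_sinh y
  have hc := Real.hasDerivAt_cosh y
  have hid := hasDerivAt_id y
  have H := (hid.mul hc).sub hs
  refine H.congr_deriv (Eq.symm ?_)
  simp only [id]; ring

lemma G0_pos : ∀ x, 0 < x → 0 < G0 x := by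
  have h3 : ∀ y : ℝ, 0 < y → 0 < y * sinh y := by
    intro y hy
    have := Real.sinh_pos_iff.mpr hy
    positivity
  have h2 := pos_of_deriv_chain G2 (fun y => y * sinh y) dG2 (by simp [G2]) h3
  have h1 := pos_of_deriv_chain G1 G2 dG1 (by norm_num [G1]) h2
  exact pos_of_deriv_chain G0 G1 dG0 (by simp [G0]) h1

end Stmt14

namespace Stmt14

noncomputable def g : ℝ → ℝ :=
  fun y => 21 * log (sinh y) - 21 * log y - 15 * log (8/15 + 7/15 * cosh y)

lemma dg (y : ℝ) (hy : 0 < y) :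
    HasDerivAt g (21 * F0 y / (y * sinh y * (8 + 7 * cosh y))) y := by
  have hs : 0 < sinh y := Real.sinh_pos_iff.mpr hy
  have hD : 0 < 8/15 + 7/15 * cosh y := by nlinarith [Real.cosh_pos y]
  have h1 := ((Real.hasDerivAt_sinh y).log hs.ne')
  have h2 := Real.hasDerivAt_log hy.ne'
  have h3 := (((Real.hasDerivAt_cosh y).const_mul (7/15:ℝ)).const_add (8/15:ℝ)).log hD.ne'
  have H := ((h1.const_mul 21).sub (h2.const_mul 21)).sub (h3.const_mul 15)
  refine H.congr_deriv (Eq.symm ?_)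
  have key := Real.cosh_sq_sub_sinh_sq y
  simp only [F0]
  field_simp
  ring_nf
  linear_combination (-105 * y) * key
end Stmt14

namespace Stmt14

lemma g_mono : StrictMonoOn g (Set.Ioi 0) := by
  apply strictMonoOn_of_deriv_pos (convex_Ioi 0)
  · exact fun y hy => (dg y hy).continuousAt.continuousWithinAt
  · intro y hy
    rw [interior_Ioi, Set.mem_Ioi] at hy
    rw [(dg y hy).deriv]
    have hs : 0 < sinh y := Real.sinh_pos_iff.mpr hy
    have hc : 0 < cosh y := Real.cosh_pos y
    have hF := F0_pos y hy
    positivity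

lemma g_tendsto : Filter.Tendsto g (nhdsWithin 0 (Set.Ioi 0)) (nhds 0) := by
  have t1 : Filter.Tendsto (fun t => sinh t / t) (nhdsWithin 0 (Set.Ioi 0)) (nhds 1) := by
    have h := Real.hasDerivAt_sinh 0
    rw [hasDerivAt_iff_tendsto_slope] at h
    have h2 : Filter.Tendsto (slope sinh 0) (nhdsWithin 0 (Set.Ioi 0)) (nhds (cosh 0)) :=
      h.mono_left (nhdsWithin_mono 0 (fun t ht => Set.mem_compl_singleton_iff.mpr
        (ne_of_gt (Set.mem_Ioi.mp ht))))
    simpa [slope_fun_def, Real.sinh_zero, Real.cosh_zero, div_eq_mul_inv, mul_comm] using h2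
  have hlog : Filter.Tendsto log (nhds 1) (nhds 0) := by
    simpa using (Real.continuousAt_log one_ne_zero).tendsto
  have t2 : Filter.Tendsto (fun t => 21 * log (sinh t / t))
      (nhdsWithin 0 (Set.Ioi 0)) (nhds (21 * 0)) :=
    (hlog.comp t1).const_mul 21
  have t3 : Filter.Tendsto (fun t => 15 * log (8/15 + 7/15 * cosh t))
      (nhdsWithin 0 (Set.Ioi 0)) (nhds (15 * 0)) := by
    have hcont : ContinuousAt (fun t : ℝ => log (8/15 + 7/15 * cosh t)) 0 := by
      have h5 : ContinuousAt (fun t : ℝ => 8/15 + 7/15 * cosh t) 0 := by fun_prop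
      exact (Real.continuousAt_log (by norm_num [Real.cosh_zero])).comp h5
    have h4 := hcont.tendsto
    have h6 : log ((fun t : ℝ => 8/15 + 7/15 * cosh t) 0) = 0 := by
      norm_num [Real.cosh_zero]
    rw [h6] at h4
    exact (h4.mono_left nhdsWithin_le_nhds).const_mul 15
  have heq : ∀ᶠ t in nhdsWithin 0 (Set.Ioi 0),
      21 * log (sinh t / t) - 15 * log (8/15 + 7/15 * cosh t) = g t := by
    filter_upwards [self_mem_nhdsWithin] with t ht
    have ht' : 0 < t := Set.mem_Ioi.mp ht
    have hs : sinh t ≠ 0 := (Real.sinh_pos_iff.mpr ht').ne'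
    simp only [g]
    rw [Real.log_div hs ht'.ne']
    ring
  have := (t2.sub t3).congr' heq
  simpa using this

lemma g_pos : ∀ x, 0 < x → 0 < g x := by
  have hnn : ∀ z, 0 < z → 0 ≤ g z := by
    intro z hz
    refine le_of_tendsto g_tendsto ?_
    filter_upwards [Ioo_mem_nhdsGT_of_mem ⟨le_refl 0, hz⟩] with t ht
    exact (g_mono (Set.mem_Ioi.mpr ht.1) (Set.mem_Ioi.mpr (ht.1.trans ht.2)) ht.2).le
  intro x hx
  have h1 := g_mono (Set.mem_Ioi.mpr (half_pos hx)) (Set.mem_Ioi.mpr hx) (half_lt_self hx)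
  exact lt_of_le_of_lt (hnn _ (half_pos hx)) h1

end Stmt14

theorem stmt_14 (x : ℝ) (hx : 0 < x) :
    (Real.cosh x) ^ ((1 : ℝ) / 3) < (1 / 3 + (2 / 3) * Real.cosh x) ^ ((1 : ℝ) / 2) ∧
    (1 / 3 + (2 / 3) * Real.cosh x) ^ ((1 : ℝ) / 2)
      < (1 / 2 + (1 / 2) * Real.cosh x) ^ ((2 : ℝ) / 3) ∧
    (1 / 2 + (1 / 2) * Real.cosh x) ^ ((2 : ℝ) / 3)
      < (8 / 15 + (7 / 15) * Real.cosh x) ^ ((5 : ℝ) / 7) ∧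
    (8 / 15 + (7 / 15) * Real.cosh x) ^ ((5 : ℝ) / 7) < Real.sinh x / x ∧
    Real.sinh x / x < 2 / 3 + (1 / 3) * Real.cosh x := by
  have hc1 : 1 < Real.cosh x := Real.one_lt_cosh.mpr hx.ne'
  have ht : 0 < Real.cosh x - 1 := by linarith
  have hs : 0 < Real.sinh x := Real.sinh_pos_iff.mpr hx
  refine ⟨?_, ?_, ?_, ?_, ?_⟩
  · have h := key_concave (Real.cosh x - 1) 1 (2/3) ht (by norm_num) (by norm_num)
    rw [show (1:ℝ) + 1 * (Real.cosh x - 1) = Real.cosh x from by ring,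
       show (1:ℝ) + 2/3 * (Real.cosh x - 1) = 1/3 + 2/3 * Real.cosh x from by ring] at h
    norm_num at h ⊢
    exact h
  · have h := key_concave (Real.cosh x - 1) (2/3) (1/2) ht (by norm_num) (by norm_num)
    rw [show (1:ℝ) + 2/3 * (Real.cosh x - 1) = 1/3 + 2/3 * Real.cosh x from by ring,
       show (1:ℝ) + 1/2 * (Real.cosh x - 1) = 1/2 + 1/2 * Real.cosh x from by ring] at h
    norm_num at h ⊢
    exact h
  · have h := key_concave (Real.cosh x - 1) (1/2) (7/15) ht (by norm_num) (by norm_num)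
    rw [show (1:ℝ) + 1/2 * (Real.cosh x - 1) = 1/2 + 1/2 * Real.cosh x from by ring,
       show (1:ℝ) + 7/15 * (Real.cosh x - 1) = 8/15 + 7/15 * Real.cosh x from by ring] at h
    norm_num at h ⊢
    exact h
  · have hg := Stmt14.g_pos x hx
    have hD : (0:ℝ) < 8/15 + 7/15 * Real.cosh x := by nlinarith [Real.cosh_pos x]
    rw [Real.rpow_def_of_pos hD,
      show Real.sinh x / x = Real.exp (Real.log (Real.sinh x / x)) from
        (Real.exp_log (by positivity)).symm]
    apply Real.exp_lt_exp.mpr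
    rw [Real.log_div hs.ne' hx.ne']
    simp only [Stmt14.g] at hg
    linarith
  · have hG := Stmt14.G0_pos x hx
    simp only [Stmt14.G0] at hG
    rw [div_lt_iff₀ hx]
    nlinarith [hG]
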